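/- Let a > b > 0 be reals, f(x) = (x²-a)/(x²-b) and z(x) = (v* A₂ v)/(v* v) with v = (x, i f(x)) and A₂ = !![1,-a;1,-b]. Then for every real x with x ≠ 0 and x² ≠ b, the point (Re z(x), Im z(x)) lies on the ellipse (X - (1-b)/2)²/((1+b)/2)² + Y²/((1+a)/2)² = 1. -/

import Mathlib

open Matrix Complex

theorem z_on_ellipse (a b : ℝ) (ha : a > b) (hb : b > 0)
    (f : ℝ → ℝ) (hf : f = fun x => (x ^ 2 - a) / (x ^ 2 - b))
    (A₂ : Matrix (Fin 2) (Fin 2) ℂ) (hA : A₂ = !![1, -(a:ℂ); 1, -(b:ℂ)])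
    (v : ℝ → Fin 2 → ℂ) (hv : v = fun (x : ℝ) => ![(x : ℂ), Complex.I * (f x : ℂ)])
    (z : ℝ → ℂ) (hz : z = fun x => (star (v x) ⬝ᵥ (A₂ *ᵥ v x)) / (star (v x) ⬝ᵥ v x))
    (x : ℝ) (hx0 : x ≠ 0) (hxb : x ^ 2 ≠ b) :
    ((z x).re - (1 - b) / 2) ^ 2 / ((1 + b) / 2) ^ 2
      + (z x).im ^ 2 / ((1 + a) / 2) ^ 2 = 1 := by
  subst hA hv hz
  set F := f x with hF
  have hD : x ^ 2 + F ^ 2 ≠ 0 := by positivity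
  have h1 : ∀ y : ℝ, (((y:ℂ)) ^ 2).re = y ^ 2 := by
    intro y; rw [sq, Complex.mul_re, sq]; simp
  have h2 : ∀ y : ℝ, (((y:ℂ)) ^ 2).im = 0 := by
    intro y; rw [sq, Complex.mul_im]; simp
  have hN : (star (![(x : ℂ), Complex.I * (F : ℂ)]) ⬝ᵥ
      ((!![1, -(a:ℂ); 1, -(b:ℂ)]) *ᵥ ![(x : ℂ), Complex.I * (F : ℂ)]))
      = Complex.ofReal (x ^ 2 - b * F ^ 2) + Complex.I * Complex.ofReal (-(1 + a) * F * x) := by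
    simp only [Matrix.mulVec, dotProduct, Fin.sum_univ_two, ← Complex.ofReal_pow]
    simp [Matrix.cons_val_zero, Matrix.cons_val_one, Complex.ext_iff, h1, h2]
    constructor <;> ring
  have hDen : (star (![(x : ℂ), Complex.I * (F : ℂ)]) ⬝ᵥ ![(x : ℂ), Complex.I * (F : ℂ)])
      = Complex.ofReal (x ^ 2 + F ^ 2) := by
    simp only [dotProduct, Fin.sum_univ_two, ← Complex.ofReal_pow]
    simp [Complex.ext_iff, h1, h2]
    ring
  simp only [← hF, hN, hDen]
  have hre : ((Complex.ofReal (x ^ 2 - b * F ^ 2) + Complex.I * Complex.ofReal (-(1 + a) * F * x)) /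
      Complex.ofReal (x ^ 2 + F ^ 2)).re = (x ^ 2 - b * F ^ 2) / (x ^ 2 + F ^ 2) := by
    rw [Complex.div_ofReal_re]
    simp [h1, h2]
  have him : ((Complex.ofReal (x ^ 2 - b * F ^ 2) + Complex.I * Complex.ofReal (-(1 + a) * F * x)) /
      Complex.ofReal (x ^ 2 + F ^ 2)).im = (-(1 + a) * F * x) / (x ^ 2 + F ^ 2) := by
    rw [Complex.div_ofReal_im]
    simp [h1, h2]
  rw [hre, him]
  have ha1 : (1 + a) ≠ 0 := by nlinarith
  have hb1 : (1 + b) ≠ 0 := by nlinarith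
  field_simp
  ring
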